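/- Let P = diag(1, 1, −1, −1), D = diag(1, −1, 1, −1), and let S be the 4×4 complex matrix whose only nonzero entries are S_{12} = S_{21} = 2. Suppose E is a 4×4 complex matrix satisfying: (i) Eᴴ = E (E is Hermitian), (ii) (I + P)·E = S, (iii) E·D = −D·E, and (iv) E² = I. Then there exists θ ∈ ℝ such that E has entries E_{12} = E_{21} = 1, E_{34} = exp(iθ), E_{43} = exp(−iθ), and all other entries zero. -/

import Mathlib

open Matrix Complex

private lemma eta_fin_four' {α : Type*} (A : Matrix (Fin 4) (Fin 4) α) :
    A = !![A 0 0, A 0 1, A 0 2, A 0 3;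
           A 1 0, A 1 1, A 1 2, A 1 3;
           A 2 0, A 2 1, A 2 2, A 2 3;
           A 3 0, A 3 1, A 3 2, A 3 3] := by
  ext i j
  fin_cases i <;> fin_cases j <;> rfl


/-- With `P = diag(1,1,-1,-1)`, `D = diag(1,-1,1,-1)` and `S` the
matrix with only nonzero entries `S₁₂ = S₂₁ = 2`, any Hermitian `E` with
`(I + P)·E = S`, `E·D = -D·E` and `E² = I` is of the stated form with entries
`E₁₂ = E₂₁ = 1`, `E₃₄ = exp(iθ)`, `E₄₃ = exp(-iθ)` for some real `θ`. -/
theorem rho4_e_determined (E : Matrix (Fin 4) (Fin 4) ℂ)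
    (hherm : Eᴴ = E)
    (hfusion : (1 + Matrix.diagonal ![1, 1, -1, -1]) * E
      = !![0, 2, 0, 0; 2, 0, 0, 0; 0, 0, 0, 0; 0, 0, 0, 0])
    (hbraid : E * Matrix.diagonal ![1, -1, 1, -1]
      = -(Matrix.diagonal ![1, -1, 1, -1] * E))
    (hsq : E * E = 1) :
    ∃ θ : ℝ, E = !![0, 1, 0, 0; 1, 0, 0, 0;
      0, 0, 0, Complex.exp (θ * Complex.I);
      0, 0, Complex.exp (-(θ : ℂ) * Complex.I), 0] := by
  -- Row 0 and row 1 from fusion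
  have e00 : E 0 0 = 0 := by have := congrFun (congrFun hfusion 0) 0; simp [Matrix.mul_apply, Fin.sum_univ_four,
    Matrix.add_apply, Matrix.one_apply, Matrix.diagonal_apply, Matrix.neg_apply] at this; first | exact this | linear_combination this | linear_combination this / 2
  have e01 : E 0 1 = 1 := by have := congrFun (congrFun hfusion 0) 1; simp [Matrix.mul_apply, Fin.sum_univ_four,
    Matrix.add_apply, Matrix.one_apply, Matrix.diagonal_apply, Matrix.neg_apply] at this; first | exact this | linear_combination this | linear_combination this / 2
  have e02 : E 0 2 = 0 := by have := congrFun (congrFun hfusion 0) 2; simp [Matrix.mul_apply, Fin.sum_univ_four,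
    Matrix.add_apply, Matrix.one_apply, Matrix.diagonal_apply, Matrix.neg_apply] at this; first | exact this | linear_combination this | linear_combination this / 2
  have e03 : E 0 3 = 0 := by have := congrFun (congrFun hfusion 0) 3; simp [Matrix.mul_apply, Fin.sum_univ_four,
    Matrix.add_apply, Matrix.one_apply, Matrix.diagonal_apply, Matrix.neg_apply] at this; first | exact this | linear_combination this | linear_combination this / 2
  have e10 : E 1 0 = 1 := by have := congrFun (congrFun hfusion 1) 0; simp [Matrix.mul_apply, Fin.sum_univ_four,
    Matrix.add_apply, Matrix.one_apply, Matrix.diagonal_apply, Matrix.neg_apply] at this; first | exact this | linear_combination this | linear_combination this / 2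
  have e11 : E 1 1 = 0 := by have := congrFun (congrFun hfusion 1) 1; simp [Matrix.mul_apply, Fin.sum_univ_four,
    Matrix.add_apply, Matrix.one_apply, Matrix.diagonal_apply, Matrix.neg_apply] at this; first | exact this | linear_combination this | linear_combination this / 2
  have e12 : E 1 2 = 0 := by have := congrFun (congrFun hfusion 1) 2; simp [Matrix.mul_apply, Fin.sum_univ_four,
    Matrix.add_apply, Matrix.one_apply, Matrix.diagonal_apply, Matrix.neg_apply] at this; first | exact this | linear_combination this | linear_combination this / 2
  have e13 : E 1 3 = 0 := by have := congrFun (congrFun hfusion 1) 3; simp [Matrix.mul_apply, Fin.sum_univ_four,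
    Matrix.add_apply, Matrix.one_apply, Matrix.diagonal_apply, Matrix.neg_apply] at this; first | exact this | linear_combination this | linear_combination this / 2
  -- Hermiticity: E j i = conj (E i j)
  have hh : ∀ i j : Fin 4, (starRingEnd ℂ) (E j i) = E i j := fun i j => by
    have := congrFun (congrFun hherm i) j
    simpa [Matrix.conjTranspose_apply] using this
  have e20 : E 2 0 = 0 := by have := hh 2 0; rw [e02] at this; simpa using this.symm
  have e21 : E 2 1 = 0 := by have := hh 2 1; rw [e12] at this; simpa using this.symm
  have e30 : E 3 0 = 0 := by have := hh 3 0; rw [e03] at this; simpa using this.symm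
  have e31 : E 3 1 = 0 := by have := hh 3 1; rw [e13] at this; simpa using this.symm
  -- Braiding kills E 2 2 and E 3 3
  have e22 : E 2 2 = 0 := by have := congrFun (congrFun hbraid 2) 2; simp [Matrix.mul_apply, Fin.sum_univ_four,
    Matrix.diagonal_apply, Matrix.neg_apply] at this; first | exact this | linear_combination this | linear_combination this / 2
  have e33 : E 3 3 = 0 := by have := congrFun (congrFun hbraid 3) 3; simp [Matrix.mul_apply, Fin.sum_univ_four,
    Matrix.diagonal_apply, Matrix.neg_apply] at this; linear_combination -this / 2
  -- |E 2 3| = 1 from hsq entry (2,2)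
  have hs : (E * E) 2 2 = (1 : Matrix (Fin 4) (Fin 4) ℂ) 2 2 := by rw [hsq]
  have habs : E 2 3 * (starRingEnd ℂ) (E 2 3) = 1 := by
    have h32 : E 3 2 = (starRingEnd ℂ) (E 2 3) := (hh 3 2).symm
    rw [Matrix.mul_apply, Fin.sum_univ_four, e20, e21, e22, h32] at hs
    simpa using hs
  have hnorm : ‖E 2 3‖ = 1 := by
    have := Complex.mul_conj (E 2 3)
    rw [habs] at this
    have h2 : Complex.normSq (E 2 3) = 1 := by
      have := this.symm
      exact_mod_cast this
    rw [← Complex.sq_norm] at h2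
    nlinarith [norm_nonneg (E 2 3)]
  obtain ⟨θ, hθ⟩ : ∃ θ : ℝ, E 2 3 = Complex.exp (θ * Complex.I) := by
    refine ⟨(E 2 3).arg, ?_⟩
    have h := Complex.norm_mul_exp_arg_mul_I (E 2 3)
    rw [hnorm, Complex.ofReal_one, one_mul] at h
    exact h.symm
  have e32 : E 3 2 = Complex.exp (-(θ : ℂ) * Complex.I) := by
    have h32 : E 3 2 = (starRingEnd ℂ) (E 2 3) := (hh 3 2).symm
    rw [h32, hθ, ← Complex.exp_conj]
    congr 1
    simp [Complex.conj_I]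
  refine ⟨θ, ?_⟩
  rw [eta_fin_four' E, e00, e01, e02, e03, e10, e11, e12, e13, e20, e21, e22, hθ, e30, e31,
    e32, e33]
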